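/- Let K ⊆ ℝⁿ be a closed convex unconditional set and let P = {x ∈ ℝⁿ : |x₁| ≤ p} be a strip with p ≥ 0. If λ_n(K) = λ_n(P), then λ_n(tK) ≥ λ_n(tP) for all t ≥ 1. -/

import Mathlib

open MeasureTheory Real Set
open scoped Pointwise ENNReal NNReal

set_option maxHeartbeats 1000000

/-- The standard exponential measure `λ_n` on `ℝⁿ`, with density
`2⁻ⁿ exp(-|x|₁)` with respect to Lebesgue measure. -/
noncomputable def lamR (n : ℕ) : MeasureTheory.Measure (Fin n → ℝ) :=
  MeasureTheory.volume.withDensity fun x =>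
    ENNReal.ofReal (((2 : ℝ) ^ n)⁻¹ * Real.exp (-(∑ i, |x i|)))

namespace SIneqAux

/-! ### Basic facts about the density -/

noncomputable def dens (n : ℕ) (x : Fin n → ℝ) : ℝ≥0∞ :=
  ENNReal.ofReal (((2 : ℝ) ^ n)⁻¹ * Real.exp (-(∑ i, |x i|)))

lemma measurable_dens (n : ℕ) : Measurable (dens n) := by
  apply Measurable.ennreal_ofReal
  apply Measurable.const_mul
  exact (Real.continuous_exp.comp
    (continuous_finset_sum _ fun i _ => (continuous_apply i).abs).neg).measurable

lemma lamR_eq (n : ℕ) : lamR n = volume.withDensity (dens n) := rfl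

lemma lamR_apply {n : ℕ} {A : Set (Fin n → ℝ)} (hA : MeasurableSet A) :
    lamR n A = ∫⁻ x in A, dens n x := by
  rw [lamR_eq, withDensity_apply _ hA]

/-! ### Sections and the product decomposition -/

noncomputable def W (s : ℝ) : ℝ≥0∞ := ENNReal.ofReal (2⁻¹ * Real.exp (-|s|))

lemma measurable_W : Measurable W := by
  apply Measurable.ennreal_ofReal
  exact (continuous_const.mul (Real.continuous_exp.comp continuous_abs.neg)).measurable

lemma W_neg (s : ℝ) : W (-s) = W s := by simp [W]

def sect (n : ℕ) (A : Set (Fin (n + 1) → ℝ)) (s : ℝ) : Set (Fin n → ℝ) :=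
  {y | Fin.cons s y ∈ A}

lemma measurable_cons_pair (n : ℕ) :
    Measurable (fun q : ℝ × (Fin n → ℝ) => (Fin.cons q.1 q.2 : Fin (n + 1) → ℝ)) := by
  apply measurable_pi_lambda
  intro i
  refine Fin.cases ?_ ?_ i
  · simpa using measurable_fst
  · intro j; exact (measurable_pi_apply j).comp measurable_snd

lemma measurable_cons (n : ℕ) (s : ℝ) :
    Measurable (fun y : Fin n → ℝ => (Fin.cons s y : Fin (n + 1) → ℝ)) :=
  (measurable_cons_pair n).comp (measurable_const.prodMk measurable_id)

lemma measurableSet_sect {n : ℕ} {A : Set (Fin (n + 1) → ℝ)} (hA : MeasurableSet A) (s : ℝ) :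
    MeasurableSet (sect n A s) :=
  hA.preimage (measurable_cons n s)

lemma sect_compl {n : ℕ} (A : Set (Fin (n + 1) → ℝ)) (s : ℝ) :
    sect n Aᶜ s = (sect n A s)ᶜ := rfl

lemma dens_cons (n : ℕ) (s : ℝ) (y : Fin n → ℝ) :
    dens (n + 1) (Fin.cons s y) = W s * dens n y := by
  unfold dens W
  rw [← ENNReal.ofReal_mul (by positivity)]
  congr 1
  have hsum : (∑ i : Fin (n + 1), |Fin.cons s y i|) = |s| + ∑ i : Fin n, |y i| := by
    rw [Fin.sum_univ_succ]; simp
  rw [hsum, pow_succ, neg_add, Real.exp_add]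
  ring

lemma lamR_succ {n : ℕ} {A : Set (Fin (n + 1) → ℝ)} (hA : MeasurableSet A) :
    lamR (n + 1) A = ∫⁻ s : ℝ, W s * lamR n (sect n A s) := by
  have hψ := MeasureTheory.measurePreserving_piFinSuccAbove
    (fun _ : Fin (n + 1) => (volume : Measure ℝ)) 0
  set ψ := MeasurableEquiv.piFinSuccAbove (fun _ : Fin (n + 1) => ℝ) 0 with hψdef
  have hsymm : ∀ (s : ℝ) (y : Fin n → ℝ), ψ.symm (s, y) = Fin.cons s y := by
    intro s y
    show (Fin.insertNthEquiv (fun _ => ℝ) 0) (s, y) = Fin.cons s y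
    rw [Fin.insertNthEquiv_zero]
    rfl
  have hint : Measurable (fun z : ℝ × (Fin n → ℝ) => Set.indicator A (dens (n + 1)) (ψ.symm z)) :=
    ((measurable_dens (n + 1)).indicator hA).comp ψ.symm.measurable
  calc lamR (n + 1) A
      = ∫⁻ x, Set.indicator A (dens (n + 1)) x ∂volume := by
        rw [lamR_apply hA, lintegral_indicator hA]
    _ = ∫⁻ z, Set.indicator A (dens (n + 1)) (ψ.symm z)
          ∂((volume : Measure ℝ).prod (Measure.pi fun _ : Fin n => volume)) := by
        rw [volume_pi, ← hψ.lintegral_comp hint]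
        apply lintegral_congr
        intro x
        simp
    _ = ∫⁻ s : ℝ, ∫⁻ y, Set.indicator A (dens (n + 1)) (ψ.symm (s, y))
          ∂(Measure.pi fun _ : Fin n => volume) ∂volume :=
        lintegral_prod _ hint.aemeasurable
    _ = ∫⁻ s : ℝ, W s * lamR n (sect n A s) := by
        apply lintegral_congr
        intro s
        have h1 : ∀ y : Fin n → ℝ, Set.indicator A (dens (n + 1)) (ψ.symm (s, y))
            = Set.indicator (sect n A s) (fun y => W s * dens n y) y := by
          intro y
          rw [hsymm]
          by_cases hy : y ∈ sect n A s
          · rw [Set.indicator_of_mem hy, Set.indicator_of_mem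
              (show Fin.cons s y ∈ A from hy), dens_cons]
          · rw [Set.indicator_of_notMem hy, Set.indicator_of_notMem
              (show Fin.cons s y ∉ A from hy)]
        simp_rw [h1]
        rw [lintegral_indicator (measurableSet_sect hA s),
          lintegral_const_mul _ (measurable_dens n), lamR_apply (measurableSet_sect hA s),
          volume_pi]

lemma measurable_lamR_sect {n : ℕ} {A : Set (Fin (n + 1) → ℝ)} (hA : MeasurableSet A) :
    Measurable fun s => lamR n (sect n A s) := by
  have key : ∀ s : ℝ, lamR n (sect n A s)
      = ∫⁻ y, Set.indicator ((fun q : ℝ × (Fin n → ℝ) => (Fin.cons q.1 q.2 : Fin (n+1) → ℝ)) ⁻¹' A)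
          (fun q => dens n q.2) (s, y) ∂volume := by
    intro s
    rw [lamR_apply (measurableSet_sect hA s), ← lintegral_indicator (measurableSet_sect hA s)]
    apply lintegral_congr
    intro y
    by_cases hy : y ∈ sect n A s
    · rw [Set.indicator_of_mem hy, Set.indicator_of_mem
        (show (s, y) ∈ (fun q : ℝ × (Fin n → ℝ) => (Fin.cons q.1 q.2 : Fin (n+1) → ℝ)) ⁻¹' A from hy)]
    · rw [Set.indicator_of_notMem hy, Set.indicator_of_notMem
        (show (s, y) ∉ (fun q : ℝ × (Fin n → ℝ) => (Fin.cons q.1 q.2 : Fin (n+1) → ℝ)) ⁻¹' A from hy)]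
  simp_rw [key]
  exact Measurable.lintegral_prod_right'
    (((measurable_dens n).comp measurable_snd).indicator ((measurable_cons_pair n) hA))

/-! ### Total mass -/

lemma integrableOn_exp_neg (v : ℝ) : IntegrableOn (fun s => Real.exp (-s)) (Ioi v) := by
  have := exp_neg_integrableOn_Ioi v one_pos
  simpa using this

lemma measurable_expneg : Measurable fun s : ℝ => Real.exp (-s) :=
  (Real.continuous_exp.comp continuous_neg).measurable

lemma lintegral_W_even {f : ℝ → ℝ≥0∞} (hf : Measurable f) (heven : ∀ s, f (-s) = f s) :
    ∫⁻ s, W s * f s = ∫⁻ s in Ioi (0 : ℝ), ENNReal.ofReal (Real.exp (-s)) * f s := by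
  have hWf : Measurable fun s => W s * f s := measurable_W.mul hf
  have hsplit : ∫⁻ s, W s * f s
      = (∫⁻ s in Iio (0 : ℝ), W s * f s) + ∫⁻ s in Ici (0 : ℝ), W s * f s := by
    have h4 := (lintegral_add_compl (μ := volume) (fun s => W s * f s)
      (measurableSet_Iio : MeasurableSet (Iio (0:ℝ)))).symm
    rwa [compl_Iio] at h4
  have hIci : ∫⁻ s in Ici (0 : ℝ), W s * f s = ∫⁻ s in Ioi (0 : ℝ), W s * f s :=
    (setLIntegral_congr Ioi_ae_eq_Ici).symm
  have hneg : ∫⁻ s in Iio (0 : ℝ), W s * f s = ∫⁻ s in Ioi (0 : ℝ), W s * f s := by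
    have hmp : MeasurePreserving (fun x : ℝ => -x) volume volume :=
      Measure.measurePreserving_neg _
    have hemb : MeasurableEmbedding (fun x : ℝ => -x) :=
      (Homeomorph.neg ℝ).measurableEmbedding
    have hpre : (fun x : ℝ => -x) ⁻¹' (Iio 0) = Ioi 0 := by
      ext x; simp
    have h2 := hmp.setLIntegral_comp_preimage_emb hemb (fun s => W s * f s) (Iio 0)
    rw [hpre] at h2
    rw [← h2]
    apply setLIntegral_congr_fun measurableSet_Ioi
    intro x _; beta_reduce
    rw [W_neg, heven]
  rw [hsplit, hIci, hneg, ← two_mul, ← lintegral_const_mul _ hWf]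
  apply setLIntegral_congr_fun measurableSet_Ioi
  intro s hs; beta_reduce
  have h3 : (2 : ℝ≥0∞) * (W s * f s) = (2 * W s) * f s := by ring
  rw [h3]
  congr 1
  rw [W, abs_of_pos hs]
  rw [show (2 : ℝ≥0∞) = ENNReal.ofReal (2 : ℝ) by simp]
  rw [← ENNReal.ofReal_mul (by norm_num)]
  congr 1
  ring

lemma lamR_univ (n : ℕ) : lamR n (univ : Set (Fin n → ℝ)) = 1 := by
  induction n with
  | zero =>
    rw [lamR_apply MeasurableSet.univ, Measure.restrict_univ]
    have h0 : ∀ x : Fin 0 → ℝ, dens 0 x = 1 := by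
      intro x; simp [dens]
    simp_rw [h0]
    rw [lintegral_one, volume_pi, Measure.pi_univ]
    simp
  | succ n ih =>
    rw [lamR_succ MeasurableSet.univ]
    have hs : ∀ s : ℝ, sect n (univ : Set (Fin (n+1) → ℝ)) s = univ := fun _ => rfl
    simp_rw [hs, ih]
    rw [lintegral_W_even measurable_const (fun _ => rfl)]
    simp_rw [mul_one]
    rw [← ofReal_integral_eq_lintegral_ofReal (integrableOn_exp_neg 0)
      (Filter.Eventually.of_forall fun s => (Real.exp_pos _).le)]
    rw [integral_exp_neg_Ioi_zero]
    simp

lemma lamR_le_one {n : ℕ} (A : Set (Fin n → ℝ)) : lamR n A ≤ 1 :=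
  (measure_mono (subset_univ A)).trans (lamR_univ n).le

lemma lamR_ne_top {n : ℕ} (A : Set (Fin n → ℝ)) : lamR n A ≠ ⊤ :=
  ((lamR_le_one A).trans_lt ENNReal.one_lt_top).ne

/-! ### The 1-dimensional layer-cake sub-lemma -/

lemma claim_layer (μ : Measure ℝ) [IsFiniteMeasure μ] (hat : ∀ x : ℝ, μ {x} = 0)
    {c : ℝ} (hc : 0 < c) :
    μ {a | c < (μ (Ioi a)).toReal} ≤ μ univ - ENNReal.ofReal c := by
  set G : ℝ → ℝ := fun u => (μ (Ioi u)).toReal with hGdef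
  have hofReal : ∀ a : ℝ, c < G a → ENNReal.ofReal c ≤ μ (Ioi a) := by
    intro a ha
    have h1 : ENNReal.ofReal c < ENNReal.ofReal (G a) :=
      (ENNReal.ofReal_lt_ofReal_iff (lt_trans hc ha)).mpr ha
    rw [ENNReal.ofReal_toReal (measure_ne_top μ _)] at h1
    exact h1.le
  rcases eq_empty_or_nonempty {a | c < G a} with hS | hS
  · rw [hS]; simp
  have hbdd : BddAbove {a | c < G a} := by
    by_contra hnb
    have hall : ∀ n : ℕ, ENNReal.ofReal c ≤ μ (Ioi (n : ℝ)) := by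
      intro n
      obtain ⟨a, ha, hba⟩ := not_bddAbove_iff.mp hnb (n : ℝ)
      exact (hofReal a ha).trans (measure_mono (Ioi_subset_Ioi hba.le))
    have htend := tendsto_measure_iInter_atTop (μ := μ) (s := fun n : ℕ => Ioi (n : ℝ))
      (fun n => measurableSet_Ioi.nullMeasurableSet)
      (fun a b hab => Ioi_subset_Ioi (Nat.cast_le.mpr hab)) ⟨0, measure_ne_top μ _⟩
    have hempty : ⋂ n : ℕ, Ioi ((n : ℝ)) = ∅ := by
      ext x
      simp only [mem_iInter, mem_Ioi, mem_empty_iff_false, iff_false]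
      push_neg
      obtain ⟨n, hn⟩ := exists_nat_gt x
      exact ⟨n, hn.le⟩
    rw [hempty] at htend
    have hle : ENNReal.ofReal c ≤ μ (∅ : Set ℝ) :=
      ge_of_tendsto htend (Filter.Eventually.of_forall hall)
    rw [measure_empty] at hle
    exact absurd (le_antisymm hle zero_le) (ENNReal.ofReal_pos.mpr hc).ne'
  set b := sSup {a | c < G a} with hbdef
  have hsubIic : {a | c < G a} ⊆ Iic b := fun a ha => le_csSup hbdd ha
  have hIci : ENNReal.ofReal c ≤ μ (Ici b) := by
    have hseq : ∀ n : ℕ, ENNReal.ofReal c ≤ μ (Ioi (b - 1 / ((n : ℝ) + 1))) := by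
      intro n
      have hlt : b - 1 / ((n : ℝ) + 1) < b := by
        have : (0 : ℝ) < 1 / ((n : ℝ) + 1) := by positivity
        linarith
      obtain ⟨a, ha, hlt'⟩ := exists_lt_of_lt_csSup hS hlt
      exact (hofReal a ha).trans (measure_mono (Ioi_subset_Ioi hlt'.le))
    have hiint : ⋂ n : ℕ, Ioi (b - 1 / ((n : ℝ) + 1)) = Ici b := by
      ext x
      simp only [mem_iInter, mem_Ioi, mem_Ici]
      constructor
      · intro hx
        by_contra hxb
        push_neg at hxb
        obtain ⟨n, hn⟩ := exists_nat_one_div_lt (by linarith : (0 : ℝ) < b - x)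
        have h5 := hx n
        linarith
      · intro hx n
        have : (0 : ℝ) < 1 / ((n : ℝ) + 1) := by positivity
        linarith
    have htend := tendsto_measure_iInter_atTop (μ := μ)
      (s := fun n : ℕ => Ioi (b - 1 / ((n : ℝ) + 1)))
      (fun n => measurableSet_Ioi.nullMeasurableSet)
      (fun i j hij => Ioi_subset_Ioi (by
        have h1 : 1 / ((j : ℝ) + 1) ≤ 1 / ((i : ℝ) + 1) := by
          apply one_div_le_one_div_of_le (by positivity)
          have : (i : ℝ) ≤ (j : ℝ) := Nat.cast_le.mpr hij
          linarith
        linarith)) ⟨0, measure_ne_top μ _⟩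
    rw [hiint] at htend
    exact ge_of_tendsto htend (Filter.Eventually.of_forall hseq)
  have hIoi : ENNReal.ofReal c ≤ μ (Ioi b) := by
    have hsub2 : Ici b ⊆ {b} ∪ Ioi b := by
      intro x hx
      rcases eq_or_lt_of_le (mem_Ici.mp hx) with h | h
      · exact Or.inl (by simp [h.symm])
      · exact Or.inr h
    have h1 : μ (Ici b) ≤ μ {b} + μ (Ioi b) :=
      (measure_mono hsub2).trans (measure_union_le _ _)
    rw [hat b, zero_add] at h1
    exact hIci.trans h1
  have hIic : μ (Iic b) = μ univ - μ (Ioi b) := by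
    have hadd : μ (Iic b) + μ (Ioi b) = μ univ := by
      rw [← compl_Iic]
      exact measure_add_measure_compl measurableSet_Iic
    exact ENNReal.eq_sub_of_add_eq (measure_ne_top μ _) hadd
  calc μ {a | c < G a} ≤ μ (Iic b) := measure_mono hsubIic
    _ = μ univ - μ (Ioi b) := hIic
    _ ≤ μ univ - ENNReal.ofReal c := tsub_le_tsub_left hIoi _

lemma sub_layer (μ : Measure ℝ) [IsFiniteMeasure μ] (hat : ∀ x : ℝ, μ {x} = 0)
    {p : ℝ} (hp : 0 < p) :
    ∫⁻ u, ENNReal.ofReal ((μ (Ioi u)).toReal ^ p) ∂μ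
      ≤ ENNReal.ofReal ((μ univ).toReal ^ (p + 1) / (p + 1)) := by
  set M : ℝ := (μ univ).toReal with hMdef
  have hM0 : 0 ≤ M := ENNReal.toReal_nonneg
  set G : ℝ → ℝ := fun u => (μ (Ioi u)).toReal with hGdef
  have hGanti : Antitone G := fun a b hab =>
    ENNReal.toReal_mono (measure_ne_top μ _) (measure_mono (Ioi_subset_Ioi hab))
  have hGm : Measurable G := hGanti.measurable
  have hG0 : ∀ u, 0 ≤ G u := fun u => ENNReal.toReal_nonneg
  have hlayer := lintegral_eq_lintegral_meas_lt μ (f := fun u => G u ^ p)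
    (Filter.Eventually.of_forall fun u => Real.rpow_nonneg (hG0 u) p)
    (hGm.pow_const p).aemeasurable
  rw [hlayer]
  have hbound : ∀ c ∈ Ioi (0 : ℝ),
      μ {a | c < G a ^ p} ≤ ENNReal.ofReal (M - c ^ p⁻¹) := by
    intro c hc
    have hc' : (0 : ℝ) < c := hc
    have hceq : {a | c < G a ^ p} = {a | c ^ p⁻¹ < G a} := by
      ext a
      simp only [mem_setOf_eq]
      constructor
      · intro h
        have h2 := Real.rpow_lt_rpow hc'.le h (inv_pos.mpr hp)
        rwa [Real.rpow_rpow_inv (hG0 a) hp.ne'] at h2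
      · intro h
        have h2 := Real.rpow_lt_rpow (Real.rpow_nonneg hc'.le _) h hp
        rwa [Real.rpow_inv_rpow hc'.le hp.ne'] at h2
    rw [hceq]
    have h2 := claim_layer μ hat (Real.rpow_pos_of_pos hc' p⁻¹)
    have h3 : μ univ = ENNReal.ofReal M := (ENNReal.ofReal_toReal (measure_ne_top μ _)).symm
    rw [h3] at h2
    rwa [← ENNReal.ofReal_sub M (Real.rpow_nonneg hc'.le _)] at h2
  refine le_trans (setLIntegral_mono' measurableSet_Ioi hbound) ?_
  rcases eq_or_lt_of_le hM0 with hM | hM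
  · -- M = 0
    have h0 : ∀ c ∈ Ioi (0 : ℝ), ENNReal.ofReal (M - c ^ p⁻¹) = 0 := by
      intro c hc
      apply ENNReal.ofReal_eq_zero.mpr
      have h4 : (0 : ℝ) ≤ c ^ p⁻¹ := Real.rpow_nonneg (le_of_lt hc) _
      rw [← hM]
      linarith
    rw [setLIntegral_congr_fun measurableSet_Ioi
      h0, lintegral_zero]
    exact zero_le
  · -- M > 0
    set K : ℝ := M ^ p with hKdef
    have hK0 : 0 < K := Real.rpow_pos_of_pos hM p
    have hKinv : K ^ p⁻¹ = M := Real.rpow_rpow_inv hM.le hp.ne'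
    have hsplit : Ioi (0 : ℝ) = Ioc 0 K ∪ Ioi K := (Ioc_union_Ioi_eq_Ioi hK0.le).symm
    rw [hsplit, lintegral_union measurableSet_Ioi (Ioc_disjoint_Ioi le_rfl)]
    have hzero : ∫⁻ c in Ioi K, ENNReal.ofReal (M - c ^ p⁻¹) = 0 := by
      rw [setLIntegral_congr_fun measurableSet_Ioi ?_,
        lintegral_zero]
      intro c hc
      apply ENNReal.ofReal_eq_zero.mpr
      have h2 : K ^ p⁻¹ < c ^ p⁻¹ := Real.rpow_lt_rpow hK0.le hc (inv_pos.mpr hp)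
      rw [hKinv] at h2
      linarith
    rw [hzero, add_zero]
    have hcont : Continuous fun c : ℝ => c ^ p⁻¹ := by
      apply continuous_iff_continuousAt.mpr
      intro x
      exact Real.continuousAt_rpow_const x p⁻¹ (Or.inr (inv_pos.mpr hp).le)
    have hintg : IntegrableOn (fun c : ℝ => M - c ^ p⁻¹) (Ioc 0 K) :=
      (continuous_const.sub hcont).integrableOn_Ioc
    have hnn : 0 ≤ᵐ[volume.restrict (Ioc 0 K)] fun c : ℝ => M - c ^ p⁻¹ := by
      filter_upwards [ae_restrict_mem measurableSet_Ioc] with c hc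
      have h2 : c ^ p⁻¹ ≤ K ^ p⁻¹ :=
        Real.rpow_le_rpow hc.1.le hc.2 (inv_pos.mpr hp).le
      rw [hKinv] at h2
      simp only [Pi.zero_apply]
      linarith
    rw [← ofReal_integral_eq_lintegral_ofReal hintg hnn]
    apply ENNReal.ofReal_le_ofReal
    have hIoc : ∫ c in Ioc 0 K, (M - c ^ p⁻¹)
        = ∫ c in (0 : ℝ)..K, (M - c ^ p⁻¹) := by
      rw [intervalIntegral.integral_of_le hK0.le]
    have hinvp : (0:ℝ) < p⁻¹ := inv_pos.mpr hp
    rw [hIoc, intervalIntegral.integral_sub intervalIntegrable_const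
      (intervalIntegral.intervalIntegrable_rpow' (by linarith : (-1:ℝ) < p⁻¹)),
      intervalIntegral.integral_const, integral_rpow (Or.inl (by linarith))]
    rw [Real.zero_rpow (by positivity : p⁻¹ + 1 ≠ 0)]
    have hKpow : K ^ (p⁻¹ + 1) = M * K := by
      rw [Real.rpow_add hK0, Real.rpow_one, hKinv]
    have hKM : K * M = M ^ (p + 1) := by
      rw [hKdef]
      nth_rewrite 2 [show M = M ^ (1 : ℝ) by rw [Real.rpow_one]]
      rw [← Real.rpow_add hM]
    rw [smul_eq_mul, sub_zero, sub_zero, hKpow, mul_comm M K, hKM]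
    have hkey : ∀ A : ℝ, A - A / (p⁻¹ + 1) = A / (p + 1) := by
      intro A
      have hp1 : p + 1 ≠ 0 := by positivity
      have hpinv1 : p⁻¹ + 1 ≠ 0 := by positivity
      field_simp
      ring
    rw [hkey]

/-! ### The 1-dimensional core inequality -/

lemma core1d {h : ℝ → ℝ} (hmeas : Measurable h) (h0 : ∀ s, 0 ≤ h s) (h1 : ∀ s, h s ≤ 1)
    (hmono : MonotoneOn h (Ici 0)) {t : ℝ} (ht : 1 ≤ t) :
    ∫ s in Ioi (0 : ℝ), Real.exp (-s) * h (t⁻¹ * s) ^ t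
      ≤ (∫ s in Ioi (0 : ℝ), Real.exp (-s) * h s) ^ t := by
  have ht0 : (0 : ℝ) < t := lt_of_lt_of_le one_pos ht
  rcases eq_or_lt_of_le ht with rfl | ht1
  · simp only [inv_one, one_mul, Real.rpow_one]
    exact le_rfl
  set g₀ : ℝ → ℝ := fun s => Real.exp (-s) * h s with hg₀def
  have hg₀m : Measurable g₀ := measurable_expneg.mul hmeas
  have hg₀nn : ∀ s, 0 ≤ g₀ s := fun s => mul_nonneg (Real.exp_pos _).le (h0 s)
  have hg₀le : ∀ s, g₀ s ≤ Real.exp (-s) := fun s => by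
    have := mul_le_mul_of_nonneg_left (h1 s) (Real.exp_pos (-s)).le
    simpa using this
  have hg₀int : ∀ v : ℝ, IntegrableOn g₀ (Ioi v) := by
    intro v
    apply Integrable.mono' (integrableOn_exp_neg v) hg₀m.aestronglyMeasurable
    filter_upwards with s
    rw [Real.norm_eq_abs, abs_of_nonneg (hg₀nn s)]
    exact hg₀le s
  set Φ : ℝ → ℝ := fun v => ∫ s in Ioi v, g₀ s with hΦdef
  set m : ℝ := Φ 0 with hmdef
  have hΦnn : ∀ v, 0 ≤ Φ v := fun v =>
    setIntegral_nonneg measurableSet_Ioi fun s _ => hg₀nn s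
  have hΦle : ∀ v, 0 ≤ v → Φ v ≤ 1 := by
    intro v hv
    have h2 : Φ v ≤ ∫ s in Ioi v, Real.exp (-s) := by
      apply setIntegral_mono_on (hg₀int v) (integrableOn_exp_neg v) measurableSet_Ioi
      intro s _
      exact hg₀le s
    rw [integral_exp_neg_Ioi] at h2
    exact h2.trans (Real.exp_le_one_iff.mpr (by linarith))
  have hΦanti : Antitone Φ := by
    intro a b hab
    apply setIntegral_mono_set (hg₀int a)
      (Filter.Eventually.of_forall fun s => hg₀nn s)
    exact Filter.Eventually.of_forall fun s hs => lt_of_le_of_lt hab hs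
  have hΦm : Measurable Φ := hΦanti.measurable
  have hkey : ∀ u ∈ Ioi (0 : ℝ),
      Real.exp (-(t * u)) * h u ^ t ≤ Φ u ^ (t - 1) * g₀ u := by
    intro u hu
    have hu0 : (0 : ℝ) < u := hu
    have hbase : g₀ u ≤ Φ u := by
      have h3 : ∫ s in Ioi u, Real.exp (-s) * h u ≤ Φ u := by
        apply setIntegral_mono_on
        · exact (integrableOn_exp_neg u).mul_const (h u)
        · exact hg₀int u
        · exact measurableSet_Ioi
        · intro s hs
          exact mul_le_mul_of_nonneg_left
            (hmono hu0.le (le_of_lt (lt_trans hu0 hs)) (le_of_lt hs)) (Real.exp_pos _).le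
      rw [integral_mul_const, integral_exp_neg_Ioi] at h3
      exact h3
    have heq1 : Real.exp (-(t * u)) * h u ^ t = (g₀ u) ^ (t - 1) * g₀ u := by
      rcases eq_or_ne (h u) 0 with h0u | h0u
      · simp [hg₀def, h0u, Real.zero_rpow ht0.ne',
          Real.zero_rpow (sub_pos.mpr ht1).ne']
      · have hpos : 0 < h u := lt_of_le_of_ne (h0 u) (Ne.symm h0u)
        rw [hg₀def]
        simp only
        rw [Real.mul_rpow (Real.exp_pos _).le (h0 u), ← Real.exp_mul]
        have hht : h u ^ t = h u ^ (t - 1) * h u := by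
          rw [← Real.rpow_add_one hpos.ne' (t - 1), sub_add_cancel]
        rw [hht]
        have hexp : Real.exp (-(t * u)) = Real.exp (-u * (t - 1)) * Real.exp (-u) := by
          rw [← Real.exp_add]; ring_nf
        rw [hexp]
        ring
    rw [heq1]
    apply mul_le_mul_of_nonneg_right _ (hg₀nn u)
    exact Real.rpow_le_rpow (hg₀nn u) hbase (by linarith)
  -- substitution
  have hsub : ∫ s in Ioi (0 : ℝ), Real.exp (-s) * h (t⁻¹ * s) ^ t
      = t * ∫ u in Ioi (0 : ℝ), Real.exp (-(t * u)) * h u ^ t := by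
    have h1' := integral_comp_mul_left_Ioi
      (fun u => Real.exp (-(t * u)) * h u ^ t) 0 (inv_pos.mpr ht0)
    simp only [mul_zero, inv_inv, smul_eq_mul] at h1'
    have h2' : ∀ s : ℝ, Real.exp (-(t * (t⁻¹ * s))) * h (t⁻¹ * s) ^ t
        = Real.exp (-s) * h (t⁻¹ * s) ^ t := by
      intro s
      rw [mul_inv_cancel_left₀ ht0.ne']
    simp_rw [h2'] at h1'
    rw [h1']
  rw [hsub]
  -- integral comparison
  have hmono_int : ∫ u in Ioi (0 : ℝ), Real.exp (-(t * u)) * h u ^ t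
      ≤ ∫ u in Ioi (0 : ℝ), Φ u ^ (t - 1) * g₀ u := by
    have haesm1 : AEStronglyMeasurable (fun u : ℝ => Real.exp (-(t * u)) * h u ^ t)
        (volume.restrict (Ioi 0)) :=
      (((Real.continuous_exp.comp (continuous_const.mul continuous_id).neg).measurable.mul
        (hmeas.pow_const t))).aestronglyMeasurable
    have haesm2 : AEStronglyMeasurable (fun u : ℝ => Φ u ^ (t - 1) * g₀ u)
        (volume.restrict (Ioi 0)) :=
      ((hΦm.pow_const (t-1)).mul hg₀m).aestronglyMeasurable
    apply setIntegral_mono_on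
    · apply Integrable.mono' (g := fun u => Real.exp (-t * u))
        (exp_neg_integrableOn_Ioi 0 ht0) haesm1
      filter_upwards with u
      rw [Real.norm_eq_abs, abs_of_nonneg (mul_nonneg (Real.exp_pos _).le
        (Real.rpow_nonneg (h0 u) t)), neg_mul]
      have : h u ^ t ≤ 1 := Real.rpow_le_one (h0 u) (h1 u) ht0.le
      have h9 := mul_le_mul_of_nonneg_left this (Real.exp_pos (-(t*u))).le
      simpa using h9
    · apply Integrable.mono' (integrableOn_exp_neg 0) haesm2
      rw [ae_restrict_iff' measurableSet_Ioi]
      filter_upwards with u hu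
      rw [Real.norm_eq_abs, abs_of_nonneg (mul_nonneg (Real.rpow_nonneg (hΦnn u) _) (hg₀nn u))]
      calc Φ u ^ (t-1) * g₀ u ≤ 1 * g₀ u := by
            apply mul_le_mul_of_nonneg_right _ (hg₀nn u)
            exact Real.rpow_le_one (hΦnn u) (hΦle u (le_of_lt hu)) (by linarith)
        _ ≤ Real.exp (-u) := by rw [one_mul]; exact hg₀le u
    · exact measurableSet_Ioi
    · exact hkey
  refine le_trans (mul_le_mul_of_nonneg_left hmono_int ht0.le) ?_
  -- final step via the layer-cake sub-lemma
  have hfinal : ∫ u in Ioi (0 : ℝ), Φ u ^ (t - 1) * g₀ u ≤ m ^ t / t := by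
    set μ : Measure ℝ := (volume.restrict (Ioi 0)).withDensity
      (fun s => ENNReal.ofReal (g₀ s)) with hμdef
    have hg₀em : Measurable fun s => ENNReal.ofReal (g₀ s) := hg₀m.ennreal_ofReal
    have hμs : ∀ v : ℝ, 0 ≤ v → μ (Ioi v) = ENNReal.ofReal (Φ v) := by
      intro v hv
      rw [hμdef, withDensity_apply _ measurableSet_Ioi,
        Measure.restrict_restrict measurableSet_Ioi,
        Set.inter_eq_self_of_subset_left (Ioi_subset_Ioi hv),
        ← ofReal_integral_eq_lintegral_ofReal (hg₀int v)
          (Filter.Eventually.of_forall fun s => hg₀nn s)]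
    have hμuniv : μ univ = ENNReal.ofReal m := by
      rw [hμdef, withDensity_apply _ MeasurableSet.univ, Measure.restrict_univ,
        ← ofReal_integral_eq_lintegral_ofReal (hg₀int 0)
          (Filter.Eventually.of_forall fun s => hg₀nn s)]
    haveI : IsFiniteMeasure μ := ⟨by rw [hμuniv]; exact ENNReal.ofReal_lt_top⟩
    have hatom : ∀ x : ℝ, μ {x} = 0 := by
      intro x
      rw [hμdef, withDensity_apply _ (measurableSet_singleton x)]
      apply setLIntegral_measure_zero
      rw [Measure.restrict_apply (measurableSet_singleton x)]
      exact measure_mono_null Set.inter_subset_left (volume_singleton)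
    have hGΦ : ∀ u ∈ Ioi (0:ℝ), (μ (Ioi u)).toReal = Φ u := by
      intro u hu
      rw [hμs u (le_of_lt hu), ENNReal.toReal_ofReal (hΦnn u)]
    have hp : (0 : ℝ) < t - 1 := by linarith
    have hsl := sub_layer μ hatom hp
    rw [hμuniv, ENNReal.toReal_ofReal (hΦnn 0), sub_add_cancel] at hsl
    -- convert lintegral over μ to the real integral
    have hGm' : Measurable fun u => ENNReal.ofReal ((μ (Ioi u)).toReal ^ (t-1)) := by
      have hanti : Antitone fun u => (μ (Ioi u)).toReal := fun a b hab =>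
        ENNReal.toReal_mono (measure_ne_top μ _) (measure_mono (Ioi_subset_Ioi hab))
      exact (hanti.measurable.pow_const (t-1)).ennreal_ofReal
    rw [hμdef, lintegral_withDensity_eq_lintegral_mul _ hg₀em hGm'] at hsl
    simp only [Pi.mul_apply, ← hμdef] at hsl
    have hrw : ∀ u ∈ Ioi (0:ℝ),
        ENNReal.ofReal (g₀ u) * ENNReal.ofReal ((μ (Ioi u)).toReal ^ (t-1))
          = ENNReal.ofReal (Φ u ^ (t-1) * g₀ u) := by
      intro u hu
      rw [hGΦ u hu, ← ENNReal.ofReal_mul (hg₀nn u)]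
      congr 1
      ring
    rw [setLIntegral_congr_fun measurableSet_Ioi hrw] at hsl
    have hintΦ : IntegrableOn (fun u => Φ u ^ (t-1) * g₀ u) (Ioi 0) := by
      apply Integrable.mono' (integrableOn_exp_neg 0)
        (((hΦm.pow_const (t-1)).mul hg₀m).aestronglyMeasurable)
      rw [ae_restrict_iff' measurableSet_Ioi]
      filter_upwards with u hu
      rw [Real.norm_eq_abs, show ((fun x => Φ x ^ (t - 1)) * g₀) u = Φ u ^ (t - 1) * g₀ u from rfl, abs_of_nonneg (mul_nonneg (Real.rpow_nonneg (hΦnn u) _) (hg₀nn u))]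
      calc Φ u ^ (t-1) * g₀ u ≤ 1 * g₀ u := by
            apply mul_le_mul_of_nonneg_right _ (hg₀nn u)
            exact Real.rpow_le_one (hΦnn u) (hΦle u (le_of_lt hu)) (by linarith)
        _ ≤ Real.exp (-u) := by rw [one_mul]; exact hg₀le u
    rw [← ofReal_integral_eq_lintegral_ofReal hintΦ (by
      filter_upwards [ae_restrict_mem measurableSet_Ioi] with u _
      exact mul_nonneg (Real.rpow_nonneg (hΦnn u) _) (hg₀nn u))] at hsl
    exact (ENNReal.ofReal_le_ofReal_iff
      (div_nonneg (Real.rpow_nonneg (hΦnn 0) t) ht0.le)).mp hsl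
  calc t * ∫ u in Ioi (0:ℝ), Φ u ^ (t-1) * g₀ u ≤ t * (m ^ t / t) :=
        mul_le_mul_of_nonneg_left hfinal ht0.le
    _ = m ^ t := by field_simp

lemma core1d' {H : ℝ → ℝ≥0∞} (hm : Measurable H) (h1 : ∀ s, H s ≤ 1)
    (hmono : MonotoneOn H (Ici 0)) {t : ℝ} (ht : 1 ≤ t) :
    ∫⁻ s in Ioi (0 : ℝ), ENNReal.ofReal (Real.exp (-s)) * H (t⁻¹ * s) ^ t
      ≤ (∫⁻ s in Ioi (0 : ℝ), ENNReal.ofReal (Real.exp (-s)) * H s) ^ t := by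
  have ht0 : (0 : ℝ) < t := lt_of_lt_of_le one_pos ht
  set h : ℝ → ℝ := fun s => (H s).toReal with hhdef
  have hne : ∀ s, H s ≠ ⊤ := fun s => ((h1 s).trans_lt ENNReal.one_lt_top).ne
  have hH : ∀ s, H s = ENNReal.ofReal (h s) := fun s => (ENNReal.ofReal_toReal (hne s)).symm
  have h0 : ∀ s, 0 ≤ h s := fun s => ENNReal.toReal_nonneg
  have h1' : ∀ s, h s ≤ 1 := by
    intro s
    have := ENNReal.toReal_mono ENNReal.one_ne_top (h1 s)
    simpa using this
  have hmeas : Measurable h := hm.ennreal_toReal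
  have hmono' : MonotoneOn h (Ici 0) := fun a ha b hb hab =>
    ENNReal.toReal_mono (hne b) (hmono ha hb hab)
  have hint : ∀ g : ℝ → ℝ, Measurable g → (∀ s, 0 ≤ g s) → (∀ s, g s ≤ 1) →
      IntegrableOn (fun s => Real.exp (-s) * g s) (Ioi 0) := by
    intro g hgm hg0 hg1
    apply Integrable.mono' (integrableOn_exp_neg 0)
      (measurable_expneg.mul hgm).aestronglyMeasurable
    filter_upwards with s
    rw [Real.norm_eq_abs, show ((fun s => Real.exp (-s)) * g) s = Real.exp (-s) * g s from rfl, abs_of_nonneg (mul_nonneg (Real.exp_pos _).le (hg0 s))]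
    have := mul_le_mul_of_nonneg_left (hg1 s) (Real.exp_pos (-s)).le
    simpa using this
  have hofReal : ∀ g : ℝ → ℝ, Measurable g → (∀ s, 0 ≤ g s) → (∀ s, g s ≤ 1) →
      ∫⁻ s in Ioi (0:ℝ), ENNReal.ofReal (Real.exp (-s)) * ENNReal.ofReal (g s)
        = ENNReal.ofReal (∫ s in Ioi (0:ℝ), Real.exp (-s) * g s) := by
    intro g hgm hg0 hg1
    rw [ofReal_integral_eq_lintegral_ofReal (hint g hgm hg0 hg1)
      (Filter.Eventually.of_forall fun s => mul_nonneg (Real.exp_pos _).le (hg0 s))]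
    apply lintegral_congr
    intro s
    rw [ENNReal.ofReal_mul (Real.exp_pos _).le]
  have hLHS : ∫⁻ s in Ioi (0 : ℝ), ENNReal.ofReal (Real.exp (-s)) * H (t⁻¹ * s) ^ t
      = ENNReal.ofReal (∫ s in Ioi (0:ℝ), Real.exp (-s) * h (t⁻¹ * s) ^ t) := by
    rw [← hofReal (fun s => h (t⁻¹ * s) ^ t)
      ((hmeas.comp (measurable_const_mul t⁻¹)).pow_const t)
      (fun s => Real.rpow_nonneg (h0 _) t)
      (fun s => Real.rpow_le_one (h0 _) (h1' _) ht0.le)]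
    apply lintegral_congr
    intro s
    congr 1
    rw [hH (t⁻¹ * s), ← ENNReal.ofReal_rpow_of_nonneg (h0 _) ht0.le]
  have hRHS : ∫⁻ s in Ioi (0 : ℝ), ENNReal.ofReal (Real.exp (-s)) * H s
      = ENNReal.ofReal (∫ s in Ioi (0:ℝ), Real.exp (-s) * h s) := by
    rw [← hofReal h hmeas h0 h1']
    apply lintegral_congr
    intro s
    rw [hH s]
  rw [hLHS, hRHS, ENNReal.ofReal_rpow_of_nonneg
    (setIntegral_nonneg measurableSet_Ioi fun s _ =>
      mul_nonneg (Real.exp_pos _).le (h0 s)) ht0.le]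
  exact ENNReal.ofReal_le_ofReal (core1d hmeas h0 h1' hmono' ht)

/-! ### Solid sets and the core induction -/

def Solid (n : ℕ) (A : Set (Fin n → ℝ)) : Prop :=
  ∀ x ∈ A, ∀ y : Fin n → ℝ, (∀ i, |y i| ≤ |x i|) → y ∈ A

lemma smul_set_eq {n : ℕ} {t : ℝ} (ht : t ≠ 0) (A : Set (Fin n → ℝ)) :
    t • A = (fun x : Fin n → ℝ => t⁻¹ • x) ⁻¹' A := by
  ext x
  rw [Set.mem_smul_set_iff_inv_smul_mem₀ ht]
  rfl

lemma measurableSet_smul {n : ℕ} {t : ℝ} (ht : t ≠ 0) {A : Set (Fin n → ℝ)}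
    (hA : MeasurableSet A) : MeasurableSet (t • A) := by
  rw [smul_set_eq ht]
  exact hA.preimage (measurable_const_smul t⁻¹)

lemma smul_cons {n : ℕ} (c s : ℝ) (y : Fin n → ℝ) :
    c • (Fin.cons s y : Fin (n+1) → ℝ) = Fin.cons (c * s) (c • y) := by
  funext i
  refine Fin.cases ?_ ?_ i
  · simp
  · intro j; simp

lemma sect_smul {n : ℕ} {t : ℝ} (ht : t ≠ 0) (A : Set (Fin (n+1) → ℝ)) (s : ℝ) :
    sect n (t • A) s = t • (sect n A (t⁻¹ * s)) := by
  ext y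
  rw [Set.mem_smul_set_iff_inv_smul_mem₀ ht]
  show Fin.cons s y ∈ t • A ↔ t⁻¹ • y ∈ sect n A (t⁻¹ * s)
  rw [Set.mem_smul_set_iff_inv_smul_mem₀ ht]
  show t⁻¹ • (Fin.cons s y : Fin (n+1) → ℝ) ∈ A ↔ _
  rw [smul_cons]
  rfl

lemma sect_solid {n : ℕ} {A : Set (Fin (n+1) → ℝ)} (hA : Solid (n+1) A) (s : ℝ) :
    Solid n (sect n A s) := by
  intro x hx y hy
  refine hA (Fin.cons s x) hx (Fin.cons s y) ?_
  intro i
  refine Fin.cases ?_ ?_ i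
  · simp
  · intro j; simpa using hy j

lemma sect_mono {n : ℕ} {A : Set (Fin (n+1) → ℝ)} (hA : Solid (n+1) A)
    {a b : ℝ} (ha : 0 ≤ a) (hab : a ≤ b) :
    sect n A b ⊆ sect n A a := by
  intro y hy
  refine hA (Fin.cons b y) hy (Fin.cons a y) ?_
  intro i
  refine Fin.cases ?_ ?_ i
  · simp only [Fin.cons_zero]
    rw [abs_of_nonneg ha, abs_of_nonneg (ha.trans hab)]
    exact hab
  · intro j; simp

lemma sect_neg {n : ℕ} {A : Set (Fin (n+1) → ℝ)} (hA : Solid (n+1) A) (s : ℝ) :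
    sect n A (-s) = sect n A s := by
  have key : ∀ u : ℝ, ∀ y, y ∈ sect n A u → y ∈ sect n A (-u) := by
    intro u y hy
    refine hA (Fin.cons u y) hy (Fin.cons (-u) y) ?_
    intro i
    refine Fin.cases ?_ ?_ i
    · simp
    · intro j; simp
  ext y
  constructor
  · intro hy
    have := key (-s) y hy
    rwa [neg_neg] at this
  · intro hy
    exact key s y hy

theorem core_induction (t : ℝ) (ht : 1 ≤ t) :
    ∀ (n : ℕ) (A : Set (Fin n → ℝ)), MeasurableSet A → Solid n A →
      lamR n ((t • A)ᶜ) ≤ (lamR n Aᶜ) ^ t := by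
  have ht0 : (0 : ℝ) < t := lt_of_lt_of_le one_pos ht
  intro n
  induction n with
  | zero =>
    intro A hA hsolid
    rcases eq_empty_or_nonempty A with rfl | hne
    · rw [Set.smul_set_empty]
      rw [show (∅ : Set (Fin 0 → ℝ))ᶜ = univ from compl_empty]
      rw [lamR_univ, ENNReal.one_rpow]
    · have hAuniv : A = univ := hne.eq_univ
      subst hAuniv
      rw [Set.smul_set_univ₀ ht0.ne']
      rw [compl_univ]
      simp only [measure_empty]
      rw [ENNReal.zero_rpow_of_pos ht0]
  | succ n IH =>
    intro A hA hsolid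
    have hsmulA : MeasurableSet (t • A) := measurableSet_smul ht0.ne' hA
    set H : ℝ → ℝ≥0∞ := fun s => lamR n ((sect n A s)ᶜ) with hHdef
    have hHmeas : Measurable H := by
      have : ∀ s, (sect n A s)ᶜ = sect n Aᶜ s := fun s => (sect_compl A s).symm
      simp_rw [hHdef, this]
      exact measurable_lamR_sect hA.compl
    have hH1 : ∀ s, H s ≤ 1 := fun s => lamR_le_one _
    have hHmono : MonotoneOn H (Ici 0) := by
      intro a ha b hb hab
      exact measure_mono (compl_subset_compl.mpr (sect_mono hsolid ha hab))
    have hHeven : ∀ s, H (-s) = H s := by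
      intro s
      rw [hHdef]
      simp only
      rw [sect_neg hsolid]
    -- decompose the dilated set
    have hstep1 : lamR (n+1) ((t • A)ᶜ)
        = ∫⁻ s : ℝ, W s * lamR n ((t • sect n A (t⁻¹ * s))ᶜ) := by
      rw [lamR_succ hsmulA.compl]
      apply lintegral_congr
      intro s
      rw [sect_compl, sect_smul ht0.ne']
    have hstep2 : ∫⁻ s : ℝ, W s * lamR n ((t • sect n A (t⁻¹ * s))ᶜ)
        ≤ ∫⁻ s : ℝ, W s * (H (t⁻¹ * s)) ^ t := by
      apply lintegral_mono
      intro s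
      apply mul_le_mul_right
      exact IH (sect n A (t⁻¹ * s)) (measurableSet_sect hA _) (sect_solid hsolid _)
    have hf2meas : Measurable fun s => (H (t⁻¹ * s)) ^ t :=
      (hHmeas.comp (measurable_const_mul t⁻¹)).pow_const t
    have hstep3 : ∫⁻ s : ℝ, W s * (H (t⁻¹ * s)) ^ t
        = ∫⁻ s in Ioi (0:ℝ), ENNReal.ofReal (Real.exp (-s)) * (H (t⁻¹ * s)) ^ t := by
      apply lintegral_W_even hf2meas
      intro s
      rw [mul_neg, hHeven]
    have hstep4 : ∫⁻ s in Ioi (0:ℝ), ENNReal.ofReal (Real.exp (-s)) * (H (t⁻¹ * s)) ^ t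
        ≤ (∫⁻ s in Ioi (0:ℝ), ENNReal.ofReal (Real.exp (-s)) * H s) ^ t :=
      core1d' hHmeas hH1 hHmono ht
    have hstep5 : ∫⁻ s in Ioi (0:ℝ), ENNReal.ofReal (Real.exp (-s)) * H s
        = lamR (n+1) Aᶜ := by
      rw [lamR_succ hA.compl]
      simp_rw [sect_compl]
      exact (lintegral_W_even hHmeas hHeven).symm
    calc lamR (n+1) ((t • A)ᶜ)
        = ∫⁻ s : ℝ, W s * lamR n ((t • sect n A (t⁻¹ * s))ᶜ) := hstep1
      _ ≤ ∫⁻ s : ℝ, W s * (H (t⁻¹ * s)) ^ t := hstep2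
      _ = ∫⁻ s in Ioi (0:ℝ), ENNReal.ofReal (Real.exp (-s)) * (H (t⁻¹ * s)) ^ t := hstep3
      _ ≤ (∫⁻ s in Ioi (0:ℝ), ENNReal.ofReal (Real.exp (-s)) * H s) ^ t := hstep4
      _ = (lamR (n+1) Aᶜ) ^ t := by rw [hstep5]

/-! ### Convex unconditional sets are solid -/

lemma solid_of_convex {n : ℕ} {K : Set (Fin n → ℝ)} (hconv : Convex ℝ K)
    (huncond : ∀ x ∈ K, ∀ ε : Fin n → ℝ, (∀ i, ε i = 1 ∨ ε i = -1) →
      (fun i => ε i * x i) ∈ K) :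
    Solid n K := by
  have hone : ∀ x ∈ K, ∀ (j : Fin n) (c : ℝ), |c| ≤ 1 →
      (fun i => if i = j then c * x i else x i) ∈ K := by
    intro x hx j c hc
    have hflip : (fun i => (if i = j then (-1 : ℝ) else 1) * x i) ∈ K := by
      apply huncond x hx
      intro i
      by_cases h : i = j <;> simp [h]
    rw [abs_le] at hc
    have hcomb := hconv hx hflip (a := (1 + c) / 2) (b := (1 - c) / 2)
      (by linarith) (by linarith) (by ring)
    convert hcomb using 1
    funext i
    simp only [Pi.add_apply, Pi.smul_apply, smul_eq_mul]
    by_cases h : i = j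
    · simp only [h, if_true]
      ring
    · simp only [h, if_false]
      ring
  have hscale : ∀ (c : Fin n → ℝ), (∀ i, |c i| ≤ 1) → ∀ x ∈ K,
      (fun i => c i * x i) ∈ K := by
    intro c hc x hx
    suffices h : ∀ S : Finset (Fin n), (fun i => if i ∈ S then c i * x i else x i) ∈ K by
      have h2 := h Finset.univ
      simpa using h2
    intro S
    induction S using Finset.induction_on with
    | empty => simpa using hx
    | @insert a S ha IHS =>
      have h3 := hone _ IHS a (c a) (hc a)
      convert h3 using 1
      funext i
      by_cases h1 : i = a
      · subst h1
        simp [ha]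
      · by_cases h2 : i ∈ S <;> simp [h1, h2]
  intro x hx y hy
  have hyx : y = fun i => (if x i = 0 then 0 else y i / x i) * x i := by
    funext i
    by_cases h : x i = 0
    · have h2 := hy i
      rw [h] at h2
      simp only [abs_zero] at h2
      have : y i = 0 := abs_nonpos_iff.mp h2
      simp [h, this]
    · simp only [h, if_false]
      rw [div_mul_cancel₀ _ h]
  rw [hyx]
  apply hscale _ _ x hx
  intro i
  by_cases h : x i = 0
  · simp [h]
  · simp only [h, if_false, abs_div]
    rw [div_le_one (abs_pos.mpr h)]
    exact hy i

/-! ### Strips -/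

lemma measurableSet_strip {n : ℕ} (i0 : Fin n) (q : ℝ) :
    MeasurableSet {x : Fin n → ℝ | |x i0| ≤ q} :=
  ((measurable_pi_apply i0).abs) measurableSet_Iic

lemma strip_smul {n : ℕ} {t : ℝ} (ht : 0 < t) (i0 : Fin n) (q : ℝ) :
    t • {x : Fin n → ℝ | |x i0| ≤ q} = {x : Fin n → ℝ | |x i0| ≤ t * q} := by
  ext x
  rw [Set.mem_smul_set_iff_inv_smul_mem₀ ht.ne']
  simp only [mem_setOf_eq, Pi.smul_apply, smul_eq_mul, abs_mul, abs_inv, abs_of_pos ht]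
  rw [inv_mul_le_iff₀ ht]

lemma strip_compl_measure {m : ℕ} {q : ℝ} (hq : 0 ≤ q) :
    lamR (m+1) ({x : Fin (m+1) → ℝ | |x 0| ≤ q}ᶜ) = ENNReal.ofReal (Real.exp (-q)) := by
  have hmeasP := measurableSet_strip (n := m+1) 0 q
  rw [lamR_succ hmeasP.compl]
  have hsect : ∀ s : ℝ, lamR m (sect m ({x : Fin (m+1) → ℝ | |x 0| ≤ q}ᶜ) s)
      = (if |s| ≤ q then 0 else 1) := by
    intro s
    have : sect m ({x : Fin (m+1) → ℝ | |x 0| ≤ q}ᶜ) s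
        = (if |s| ≤ q then (∅ : Set (Fin m → ℝ)) else univ) := by
      ext y
      show ¬ |(Fin.cons s y : Fin (m+1) → ℝ) 0| ≤ q ↔ _
      rw [Fin.cons_zero]
      by_cases h : |s| ≤ q <;> simp [h]
    rw [this]
    by_cases h : |s| ≤ q <;> simp [h, lamR_univ]
  simp_rw [hsect]
  rw [lintegral_W_even (by
      apply Measurable.ite _ measurable_const measurable_const
      exact (measurable_abs) measurableSet_Iic)
    (by intro s; rw [abs_neg])]
  have hcongr : ∀ s ∈ Ioi (0:ℝ),
      ENNReal.ofReal (Real.exp (-s)) * (if |s| ≤ q then 0 else 1)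
        = (Ioi q).indicator (fun s => ENNReal.ofReal (Real.exp (-s))) s := by
    intro s hs
    rw [abs_of_pos hs]
    by_cases h : s ≤ q
    · simp [h, Set.indicator_of_notMem (by simpa using h : s ∉ Ioi q)]
    · rw [if_neg h, mul_one, Set.indicator_of_mem (by simpa using lt_of_not_ge h : s ∈ Ioi q)]
  rw [setLIntegral_congr_fun measurableSet_Ioi hcongr]
  rw [lintegral_indicator measurableSet_Ioi, Measure.restrict_restrict measurableSet_Ioi,
    Set.inter_eq_self_of_subset_left (Ioi_subset_Ioi hq)]
  rw [← ofReal_integral_eq_lintegral_ofReal (integrableOn_exp_neg q)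
    (Filter.Eventually.of_forall fun s => (Real.exp_pos _).le)]
  rw [integral_exp_neg_Ioi]


end SIneqAux

/-- **S-inequality for the exponential measure (dilation `t ≥ 1`).**
For a closed convex unconditional `K ⊆ ℝⁿ` and a strip `P = {x : |x₁| ≤ p}` with
`λ_n(K) = λ_n(P)`, one has `λ_n(tK) ≥ λ_n(tP)` for all `t ≥ 1`. -/
theorem exponential_S_inequality_ge
    (n : ℕ) (hn : 0 < n) (K : Set (Fin n → ℝ)) (hK_closed : IsClosed K)
    (hK_conv : Convex ℝ K)
    (hK_uncond : ∀ x ∈ K, ∀ ε : Fin n → ℝ, (∀ i, ε i = 1 ∨ ε i = -1) →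
      (fun i => ε i * x i) ∈ K)
    (p : ℝ) (hp : 0 ≤ p)
    (heq : lamR n K = lamR n {x | |x ⟨0, hn⟩| ≤ p}) :
    ∀ t : ℝ, 1 ≤ t →
      lamR n (t • {x : Fin n → ℝ | |x ⟨0, hn⟩| ≤ p}) ≤ lamR n (t • K) := by
  intro t ht
  obtain ⟨m, rfl⟩ : ∃ m, n = m + 1 := ⟨n - 1, (Nat.succ_pred_eq_of_pos hn).symm⟩
  open SIneqAux in
  have hi0 : (⟨0, hn⟩ : Fin (m+1)) = 0 := Fin.ext (by simp)
  rw [hi0] at heq ⊢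
  set P : Set (Fin (m+1) → ℝ) := {x | |x 0| ≤ p} with hPdef
  have ht0 : (0:ℝ) < t := lt_of_lt_of_le one_pos ht
  have hKm : MeasurableSet K := hK_closed.measurableSet
  have hPm : MeasurableSet P := SIneqAux.measurableSet_strip 0 p
  have htKm : MeasurableSet (t • K) := SIneqAux.measurableSet_smul ht0.ne' hKm
  have htP : t • P = {x : Fin (m+1) → ℝ | |x 0| ≤ t * p} := SIneqAux.strip_smul ht0 0 p
  have htPm : MeasurableSet (t • P) := by
    rw [htP]; exact SIneqAux.measurableSet_strip 0 (t * p)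
  have hsolid : SIneqAux.Solid (m+1) K := SIneqAux.solid_of_convex hK_conv hK_uncond
  have hcore := SIneqAux.core_induction t ht (m+1) K hKm hsolid
  have hPval : lamR (m+1) Pᶜ = ENNReal.ofReal (Real.exp (-p)) :=
    SIneqAux.strip_compl_measure hp
  have htPval : lamR (m+1) ((t • P)ᶜ) = ENNReal.ofReal (Real.exp (-(t * p))) := by
    rw [htP]
    exact SIneqAux.strip_compl_measure (by positivity)
  have hKval : lamR (m+1) Kᶜ = ENNReal.ofReal (Real.exp (-p)) := by
    rw [measure_compl hKm (SIneqAux.lamR_ne_top K), heq,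
      ← measure_compl hPm (SIneqAux.lamR_ne_top P), hPval]
  have hchain : lamR (m+1) ((t • K)ᶜ) ≤ lamR (m+1) ((t • P)ᶜ) := by
    rw [htPval]
    calc lamR (m+1) ((t • K)ᶜ) ≤ (lamR (m+1) Kᶜ) ^ t := hcore
      _ = (ENNReal.ofReal (Real.exp (-p))) ^ t := by rw [hKval]
      _ = ENNReal.ofReal ((Real.exp (-p)) ^ t) :=
          ENNReal.ofReal_rpow_of_nonneg (Real.exp_pos _).le ht0.le
      _ = ENNReal.ofReal (Real.exp (-(t * p))) := by
          rw [← Real.exp_mul]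
          ring_nf
  have hfin : ∀ S : Set (Fin (m+1) → ℝ), MeasurableSet S →
      lamR (m+1) S = 1 - lamR (m+1) Sᶜ := by
    intro S hS
    have h2 := measure_compl hS (SIneqAux.lamR_ne_top S)
    rw [SIneqAux.lamR_univ] at h2
    rw [h2, ENNReal.sub_sub_cancel ENNReal.one_ne_top (SIneqAux.lamR_le_one S)]
  rw [hfin _ htPm, hfin _ htKm]
  exact tsub_le_tsub_left hchain 1
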